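/- Let X be a real Banach space whose complexification X ⊕_ℂ X is a primary complex Banach space. Then X admits at most one complex structure up to ℂ-linear isomorphism: for any two operators A, B on X with A² = B² = −Id, the complex spaces X^A and X^B are ℂ-linearly isomorphic. -/

import Mathlib

open ContinuousLinearMap


/-- A complex structure on a real Banach space `Y` given by an operator `J` with
`J² = -Id` is *primary* if for every continuous projection `P` commuting with `J`,
the space `Y^J` is `ℂ`-linearly isomorphic either to the range of `P` or to the
range of `1 - P` (such an isomorphism onto the range of a projection `R` commuting
with `J` is encoded by operators `T, S` commuting with `J` with `S ∘ T = Id`,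
`T ∘ S = R`). -/
def IsPrimaryStructure {Y : Type*} [NormedAddCommGroup Y] [NormedSpace ℝ Y]
    (J : Y →L[ℝ] Y) : Prop :=
  ∀ P : Y →L[ℝ] Y, P * P = P → P * J = J * P →
    (∃ T S : Y →L[ℝ] Y, T * J = J * T ∧ S * J = J * S ∧ S * T = 1 ∧ T * S = P) ∨
    (∃ T S : Y →L[ℝ] Y, T * J = J * T ∧ S * J = J * S ∧ S * T = 1 ∧ T * S = 1 - P)


/-- Generic ring computation: conjugating the data `(T, S)` by the involution `σ`
turns an isomorphism onto (range of) `Q` into one onto `1 - Q`. -/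
lemma conj_case {R : Type*} [Ring R] (σ T S J Q : R)
    (hσσ : σ * σ = 1) (hσJ : σ * J = -(J * σ)) (hσQσ : σ * Q * σ = 1 - Q)
    (hTJ : T * J = J * T) (hSJ : S * J = J * S) (hST : S * T = 1) (hTS : T * S = Q) :
    (σ * T * σ) * J = J * (σ * T * σ) ∧ (σ * S * σ) * J = J * (σ * S * σ) ∧
      (σ * S * σ) * (σ * T * σ) = 1 ∧ (σ * T * σ) * (σ * S * σ) = 1 - Q := by
  have conj : ∀ W : R, W * J = J * W → (σ * W * σ) * J = J * (σ * W * σ) := by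
    intro W hW
    have h1 : (σ * W * σ) * J = σ * W * (σ * J) := by noncomm_ring
    rw [h1, hσJ]
    have h2 : σ * W * -(J * σ) = -(σ * (W * J) * σ) := by noncomm_ring
    rw [h2, hW]
    have h3 : -(σ * (J * W) * σ) = -(σ * J) * (W * σ) := by noncomm_ring
    rw [h3, hσJ, neg_neg]
    noncomm_ring
  refine ⟨conj T hTJ, conj S hSJ, ?_, ?_⟩
  · have h1 : (σ * S * σ) * (σ * T * σ) = σ * S * (σ * σ) * T * σ := by noncomm_ring
    rw [h1, hσσ]
    have h2 : σ * S * 1 * T * σ = σ * (S * T) * σ := by noncomm_ring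
    rw [h2, hST, mul_one, hσσ]
  · have h1 : (σ * T * σ) * (σ * S * σ) = σ * T * (σ * σ) * S * σ := by noncomm_ring
    rw [h1, hσσ]
    have h2 : σ * T * 1 * S * σ = σ * (T * S) * σ := by noncomm_ring
    rw [h2, hTS, hσQσ]

section Aux

variable {X : Type*} [NormedAddCommGroup X] [NormedSpace ℝ X]

/-- The canonical complex structure on `X × X`. -/
noncomputable def Jc (X : Type*) [NormedAddCommGroup X] [NormedSpace ℝ X] :
    (X × X) →L[ℝ] (X × X) :=
  (-(ContinuousLinearMap.snd ℝ X X)).prod (ContinuousLinearMap.fst ℝ X X)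

lemma Jc_apply (p : X × X) : Jc X p = (-p.2, p.1) := rfl

end Aux


section Aux2

variable {X : Type*} [NormedAddCommGroup X] [NormedSpace ℝ X]

lemma key_iso (hprim : IsPrimaryStructure (Jc X))
    (A : X →L[ℝ] X) (hA : A * A = -1) :
    ∃ (t : X →L[ℝ] (X × X)) (s : (X × X) →L[ℝ] X),
      s.comp t = 1 ∧ t.comp s = 1 ∧ t.comp A = (Jc X).comp t := by
  have hAx : ∀ x, A (A x) = -x := fun x => by
    have := ContinuousLinearMap.ext_iff.mp hA x; simpa using this
  set Q : (X × X) →L[ℝ] (X × X) := (2⁻¹ : ℝ) • (1 + (A.prodMap A) * (Jc X)) with hQdef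
  have hQ_apply : ∀ p : X × X, Q p =
      ((2⁻¹ : ℝ) • (p.1 - A p.2), (2⁻¹ : ℝ) • (p.2 + A p.1)) := by
    intro p
    rw [hQdef]
    refine Prod.ext ?_ ?_ <;>
      simp [mul_apply, Jc_apply, smul_sub, smul_add, sub_eq_add_neg]
  have hQQ : Q * Q = Q := by
    refine ContinuousLinearMap.ext fun p => ?_
    rw [ContinuousLinearMap.mul_apply]
    simp only [hQ_apply]
    refine Prod.ext ?_ ?_ <;>
      simp only [map_smul, map_sub, map_add, map_neg, hAx, smul_sub, smul_add, smul_neg, smul_smul, neg_neg, Prod.fst_sub, Prod.snd_sub, Prod.fst_add, Prod.snd_add] <;> module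
  have hQJ : Q * Jc X = Jc X * Q := by
    refine ContinuousLinearMap.ext fun p => ?_
    rw [ContinuousLinearMap.mul_apply, ContinuousLinearMap.mul_apply]
    simp only [hQ_apply, Jc_apply]
    refine Prod.ext ?_ ?_ <;> simp only [map_smul, map_sub, map_add, map_neg, hAx, smul_sub, smul_add, smul_neg, smul_smul, neg_neg, Prod.fst_sub, Prod.snd_sub, Prod.fst_add, Prod.snd_add] <;> module
  set σ : (X × X) →L[ℝ] (X × X) :=
    (ContinuousLinearMap.fst ℝ X X).prod (-(ContinuousLinearMap.snd ℝ X X)) with hσdef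
  have hσ_apply : ∀ p : X × X, σ p = (p.1, -p.2) := fun p => rfl
  have hσσ : σ * σ = 1 := by
    refine ContinuousLinearMap.ext fun p => ?_
    simp [mul_apply, hσ_apply]
  have hσJ : σ * Jc X = -(Jc X * σ) := by
    refine ContinuousLinearMap.ext fun p => ?_
    simp [mul_apply, hσ_apply, Jc_apply]
  have hσQσ : σ * Q * σ = 1 - Q := by
    refine ContinuousLinearMap.ext fun p => ?_
    rw [ContinuousLinearMap.mul_apply, ContinuousLinearMap.mul_apply, sub_apply, ContinuousLinearMap.one_apply]
    simp only [hQ_apply, hσ_apply]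
    refine Prod.ext ?_ ?_ <;> simp only [map_smul, map_sub, map_add, map_neg, hAx, smul_sub, smul_add, smul_neg, smul_smul, neg_neg, Prod.fst_sub, Prod.snd_sub, Prod.fst_add, Prod.snd_add] <;> module
  set u : X →L[ℝ] (X × X) := (ContinuousLinearMap.id ℝ X).prod (-A) with hudef
  have hu_apply : ∀ x, u x = (x, -A x) := fun x => rfl
  set v : (X × X) →L[ℝ] X := (ContinuousLinearMap.fst ℝ X X).comp (1 - Q) with hvdef
  have hv_apply : ∀ p : X × X, v p = (2⁻¹ : ℝ) • (p.1 + A p.2) := by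
    intro p
    rw [hvdef]
    simp only [comp_apply, sub_apply, one_apply, hQ_apply, coe_fst']
    show p.1 - (2⁻¹ : ℝ) • (p.1 - A p.2) = _
    module
  have huA : u.comp A = (Jc X).comp u := by
    refine ContinuousLinearMap.ext fun x => ?_
    simp [comp_apply, hu_apply, Jc_apply, hAx]
  have hQu : ((1 - Q : (X × X) →L[ℝ] (X × X))).comp u = u := by
    refine ContinuousLinearMap.ext fun x => ?_
    rw [comp_apply, sub_apply, ContinuousLinearMap.one_apply]
    simp only [hu_apply, hQ_apply]
    refine Prod.ext ?_ ?_ <;> simp only [map_smul, map_sub, map_add, map_neg, hAx, smul_sub, smul_add, smul_neg, smul_smul, neg_neg, Prod.fst_sub, Prod.snd_sub, Prod.fst_add, Prod.snd_add] <;> module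
  have hvu : v.comp u = 1 := by
    refine ContinuousLinearMap.ext fun x => ?_
    rw [comp_apply, hv_apply]
    simp only [hu_apply, hAx]
    show (2⁻¹ : ℝ) • (x + A (-A x)) = x
    rw [map_neg, hAx]
    module
  have huv : u.comp v = 1 - Q := by
    refine ContinuousLinearMap.ext fun p => ?_
    rw [comp_apply, sub_apply, ContinuousLinearMap.one_apply, hv_apply]
    simp only [hu_apply, hQ_apply, map_smul, map_add, hAx]
    refine Prod.ext ?_ ?_ <;> simp only [map_smul, map_sub, map_add, map_neg, hAx, smul_sub, smul_add, smul_neg, smul_smul, neg_neg, Prod.fst_sub, Prod.snd_sub, Prod.fst_add, Prod.snd_add] <;> module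
  have main : ∃ T S : (X × X) →L[ℝ] (X × X),
      T * Jc X = Jc X * T ∧ S * Jc X = Jc X * S ∧ S * T = 1 ∧ T * S = 1 - Q := by
    rcases hprim Q hQQ hQJ with ⟨T, S, hTJ, hSJ, hST, hTS⟩ | h
    · obtain ⟨h1, h2, h3, h4⟩ := conj_case σ T S (Jc X) Q hσσ hσJ hσQσ hTJ hSJ hST hTS
      exact ⟨σ * T * σ, σ * S * σ, h1, h2, h3, h4⟩
    · exact h
  obtain ⟨T, S, hTJ, hSJ, hST, hTS⟩ := main
  refine ⟨S.comp u, v.comp T, ?_, ?_, ?_⟩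
  · have h1 : (v.comp T).comp (S.comp u) = v.comp ((T * S).comp u) := by
      rw [ContinuousLinearMap.comp_assoc]; rfl
    rw [h1, hTS, hQu, hvu]
  · have h1 : (S.comp u).comp (v.comp T) = (S * (u.comp v) * T : (X × X) →L[ℝ] (X × X)) := by
      rw [ContinuousLinearMap.comp_assoc]; rfl
    rw [h1, huv, ← hTS]
    have h2 : S * (T * S) * T = (S * T) * (S * T) := by noncomm_ring
    rw [h2, hST, one_mul]
  · calc (S.comp u).comp A = S.comp (u.comp A) := by rw [ContinuousLinearMap.comp_assoc]
      _ = S.comp ((Jc X).comp u) := by rw [huA]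
      _ = (S * Jc X).comp u := by rw [ContinuousLinearMap.mul_def, ContinuousLinearMap.comp_assoc]
      _ = (Jc X * S).comp u := by rw [hSJ]
      _ = (Jc X).comp (S.comp u) := by rw [ContinuousLinearMap.mul_def, ContinuousLinearMap.comp_assoc]

end Aux2

/-- let `X` be a real Banach space whose complexification `X ⊕ X`
with the canonical complex structure `J(x,y) = (-y,x)` is primary. Then `X` admits
at most one complex structure up to `ℂ`-linear isomorphism: for any operators
`A, B` on `X` with `A² = B² = -Id`, the complex spaces `X^A` and `X^B` are
`ℂ`-linearly isomorphic (encoded by an invertible operator `T` with `TA = BT`). -/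
theorem stmt_14 (X : Type*) [NormedAddCommGroup X] [NormedSpace ℝ X] [CompleteSpace X]
    (hprim : IsPrimaryStructure
      ((-(ContinuousLinearMap.snd ℝ X X)).prod (ContinuousLinearMap.fst ℝ X X)))
    (A B : X →L[ℝ] X) (hA : A * A = -1) (hB : B * B = -1) :
    ∃ T : X →L[ℝ] X, IsUnit T ∧ T * A = B * T := by
  have hprim' : IsPrimaryStructure (Jc X) := hprim
  obtain ⟨tA, sA, hA1, hA2, hA3⟩ := key_iso hprim' A hA
  obtain ⟨tB, sB, hB1, hB2, hB3⟩ := key_iso hprim' B hB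
  refine ⟨sB.comp tA, ?_, ?_⟩
  · refine ⟨⟨sB.comp tA, sA.comp tB, ?_, ?_⟩, rfl⟩
    · show (sB.comp tA).comp (sA.comp tB) = 1
      calc (sB.comp tA).comp (sA.comp tB) = sB.comp ((tA.comp sA).comp tB) := by
            rw [ContinuousLinearMap.comp_assoc, ContinuousLinearMap.comp_assoc]
        _ = sB.comp tB := by rw [hA2]; rfl
        _ = 1 := hB1
    · show (sA.comp tB).comp (sB.comp tA) = 1
      calc (sA.comp tB).comp (sB.comp tA) = sA.comp ((tB.comp sB).comp tA) := by
            rw [ContinuousLinearMap.comp_assoc, ContinuousLinearMap.comp_assoc]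
        _ = sA.comp tA := by rw [hB2]; rfl
        _ = 1 := hA1
  · have hsBJ : sB.comp (Jc X) = B.comp sB := by
      calc sB.comp (Jc X) = sB.comp ((Jc X).comp (tB.comp sB)) := by rw [hB2]; rfl
        _ = sB.comp (((Jc X).comp tB).comp sB) := by rw [ContinuousLinearMap.comp_assoc]
        _ = sB.comp ((tB.comp B).comp sB) := by rw [← hB3]
        _ = ((sB.comp tB).comp B).comp sB := by
            simp only [ContinuousLinearMap.comp_assoc]
        _ = B.comp sB := by rw [hB1]; rfl
    show (sB.comp tA).comp A = B.comp (sB.comp tA)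
    calc (sB.comp tA).comp A = sB.comp (tA.comp A) := by rw [ContinuousLinearMap.comp_assoc]
      _ = sB.comp ((Jc X).comp tA) := by rw [hA3]
      _ = (sB.comp (Jc X)).comp tA := by rw [ContinuousLinearMap.comp_assoc]
      _ = (B.comp sB).comp tA := by rw [hsBJ]
      _ = B.comp (sB.comp tA) := by rw [ContinuousLinearMap.comp_assoc]
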